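/- Let {A_{i,j} : i,j ∈ {−1,0,1}} be nonnegative s₀×s₀ matrices whose sum A_{*,*} is an irreducible stochastic matrix and such that the associated random walk on ℤ²×S₀ is irreducible and aperiodic. Define C(e^{s₁}, e^{s₂}) = Σ_{i,j} A_{i,j} e^{i s₁ + j s₂} and χ(e^{s₁}, e^{s₂}) = spr(C(e^{s₁}, e^{s₂})). Then there exist n₀ ≥ 1 and b* > 0 such that χ(e^{s₁}, e^{s₂}) ≥ (b*(e^{s₁} + e^{s₂} + e^{−s₁} + e^{−s₂}))^{1/n₀} for all (s₁,s₂) ∈ ℝ²; consequently the set Γ̄ = {(s₁,s₂) : χ(e^{s₁}, e^{s₂}) ≤ 1} is bounded. -/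

import Mathlib

open Matrix

/-- The spectral radius of a complex square matrix: the maximum modulus of its
eigenvalues (elements of its spectrum). -/
noncomputable def spr {n : Type*} [Fintype n] [DecidableEq n] (A : Matrix n n ℂ) : ℝ :=
  sSup ((fun z : ℂ => ‖z‖) '' spectrum ℂ A)

/-- `C(e^{s₁}, e^{s₂}) = Σ_{i,j ∈ {−1,0,1}} A_{i,j} e^{i s₁ + j s₂}`. -/
noncomputable def Cmat {S : Type*} [Fintype S] (A : ℤ → ℤ → Matrix S S ℝ) (s₁ s₂ : ℝ) :
    Matrix S S ℝ :=
  ∑ i ∈ Finset.Icc (-1 : ℤ) 1, ∑ j ∈ Finset.Icc (-1 : ℤ) 1,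
    Real.exp ((i : ℝ) * s₁ + (j : ℝ) * s₂) • A i j

/-- The `n`-step transition kernel of the random walk on `ℤ² × S` with skip-free block
transition matrices `A_{Δx₁, Δx₂}`, `Δx₁, Δx₂ ∈ {−1,0,1}`. -/
noncomputable def Pn {S : Type*} [Fintype S] [DecidableEq S]
    (A : ℤ → ℤ → Matrix S S ℝ) : ℕ → (ℤ × ℤ × S) → (ℤ × ℤ × S) → ℝ
  | 0 => fun s t => if s = t then 1 else 0
  | n + 1 => fun s t =>
      ∑ d₁ ∈ Finset.Icc (-1 : ℤ) 1, ∑ d₂ ∈ Finset.Icc (-1 : ℤ) 1, ∑ k : S,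
        Pn A n s (t.1 - d₁, t.2.1 - d₂, k) * A d₁ d₂ k t.2.2

section auxSpec

variable {S : Type*} [Fintype S] [DecidableEq S]

lemma my_eval_charpoly (M : Matrix S S ℂ) (z : ℂ) :
    M.charpoly.eval z = (z • (1 : Matrix S S ℂ) - M).det := by
  rw [Matrix.charpoly, ← Polynomial.coe_evalRingHom, RingHom.map_det]
  congr 1
  ext i j
  by_cases h : i = j
  · subst h
    simp [Matrix.charmatrix_apply_eq, Matrix.one_apply]
  · simp [Matrix.charmatrix_apply_ne _ _ _ h, Matrix.one_apply_ne h]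

lemma my_mem_spectrum_iff (M : Matrix S S ℂ) (z : ℂ) :
    z ∈ spectrum ℂ M ↔ M.charpoly.eval z = 0 := by
  rw [spectrum.mem_iff, my_eval_charpoly, Matrix.isUnit_iff_isUnit_det, isUnit_iff_ne_zero,
    not_ne_iff, Algebra.algebraMap_eq_smul_one]

lemma my_spectrum_finite (M : Matrix S S ℂ) : (spectrum ℂ M).Finite := by
  have h : spectrum ℂ M ⊆ {z | M.charpoly.IsRoot z} := fun z hz => (my_mem_spectrum_iff M z).1 hz
  exact Set.Finite.subset (Polynomial.finite_setOf_isRoot M.charpoly_monic.ne_zero) h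

lemma my_spectrum_nonempty [Nonempty S] (M : Matrix S S ℂ) : (spectrum ℂ M).Nonempty := by
  have hd : M.charpoly.degree ≠ 0 := by
    rw [Matrix.charpoly_degree_eq_dim]
    simp [Fintype.card_ne_zero]
  obtain ⟨z, hz⟩ := IsAlgClosed.exists_root M.charpoly hd
  exact ⟨z, (my_mem_spectrum_iff M z).2 hz⟩

lemma spr_nonneg [Nonempty S] (M : Matrix S S ℂ) : 0 ≤ spr M := by
  have h := ((my_spectrum_nonempty M).image (fun z : ℂ => ‖z‖)).csSup_mem
    ((my_spectrum_finite M).image _)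
  obtain ⟨z, _, hz⟩ := h
  rw [spr, ← hz]
  exact norm_nonneg z

lemma le_spr (M : Matrix S S ℂ) {z : ℂ} (hz : z ∈ spectrum ℂ M) : ‖z‖ ≤ spr M :=
  le_csSup (((my_spectrum_finite M).image _).bddAbove) ⟨z, hz, rfl⟩

lemma spr_pow [Nonempty S] (M : Matrix S S ℂ) {n : ℕ} (hn : 0 < n) :
    spr (M ^ n) = spr M ^ n := by
  have hspec : spectrum ℂ (M ^ n) = (· ^ n) '' spectrum ℂ M := spectrum.map_pow_of_pos M hn
  have him : (fun z : ℂ => ‖z‖) '' spectrum ℂ (M ^ n) = (· ^ n) '' ((fun z : ℂ => ‖z‖) '' spectrum ℂ M) := by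
    rw [hspec, Set.image_image, Set.image_image]
    exact Set.image_congr fun z _ => norm_pow z n
  have hfin : ((fun z : ℂ => ‖z‖) '' spectrum ℂ M).Finite := (my_spectrum_finite M).image _
  have hne : ((fun z : ℂ => ‖z‖) '' spectrum ℂ M).Nonempty := (my_spectrum_nonempty M).image _
  have hmem : spr M ∈ (fun z : ℂ => ‖z‖) '' spectrum ℂ M := hne.csSup_mem hfin
  rw [spr, him]
  refine le_antisymm (csSup_le (hne.image _) ?_) (le_csSup ((hfin.image _).bddAbove) ?_)
  · rintro x ⟨y, hy, rfl⟩
    have h0 : 0 ≤ y := by obtain ⟨z, _, rfl⟩ := hy; exact norm_nonneg z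
    exact pow_le_pow_left₀ h0 (le_csSup hfin.bddAbove hy) n
  · exact ⟨spr M, hmem, rfl⟩

lemma trace_le_spr [Nonempty S] (M : Matrix S S ℂ) {n : ℕ} (hn : 0 < n) :
    ‖(M ^ n).trace‖ ≤ (Fintype.card S : ℝ) * spr M ^ n := by
  rw [Matrix.trace_eq_sum_roots_charpoly (M ^ n)]
  calc ‖(M ^ n).charpoly.roots.sum‖
      ≤ ((M ^ n).charpoly.roots.map (fun z : ℂ => ‖z‖)).sum := by
        simpa using norm_multiset_sum_le ((M ^ n).charpoly.roots)
    _ ≤ (Multiset.card ((M ^ n).charpoly.roots.map (fun z : ℂ => ‖z‖))) • (spr M ^ n) := by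
        refine Multiset.sum_le_card_nsmul _ _ ?_
        intro x hx
        obtain ⟨z, hz, rfl⟩ := Multiset.mem_map.1 hx
        have hzs : z ∈ spectrum ℂ (M ^ n) := by
          rw [my_mem_spectrum_iff]
          exact (Polynomial.mem_roots ((M ^ n).charpoly_monic.ne_zero)).1 hz
        calc ‖z‖ ≤ spr (M ^ n) := le_spr _ hzs
          _ = spr M ^ n := spr_pow M hn
    _ ≤ (Fintype.card S : ℝ) * spr M ^ n := by
        rw [nsmul_eq_mul, Multiset.card_map]
        have hc : (Multiset.card ((M ^ n).charpoly.roots) : ℝ) ≤ (Fintype.card S : ℝ) := by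
          exact_mod_cast le_trans (Polynomial.card_roots' _)
            (le_of_eq ((M ^ n).charpoly_natDegree_eq_dim))
        exact mul_le_mul_of_nonneg_right hc (pow_nonneg (spr_nonneg M) n)

lemma trace_map_ofReal (M : Matrix S S ℝ) :
    (M.map Complex.ofReal).trace = Complex.ofReal M.trace := by
  simp [Matrix.trace, Matrix.diag, Matrix.map_apply]

lemma map_ofReal_pow (M : Matrix S S ℝ) (n : ℕ) :
    (M.map Complex.ofReal) ^ n = (M ^ n).map Complex.ofReal := by
  have h : ∀ B : Matrix S S ℝ, B.map Complex.ofReal = Complex.ofRealHom.mapMatrix B :=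
    fun B => rfl
  rw [h, h, ← map_pow]

end auxSpec

section auxChain

variable {S : Type*} [Fintype S] [DecidableEq S] (A : ℤ → ℤ → Matrix S S ℝ)

lemma cmat_apply (s₁ s₂ : ℝ) (k q : S) :
    Cmat A s₁ s₂ k q = ∑ i ∈ Finset.Icc (-1 : ℤ) 1, ∑ j ∈ Finset.Icc (-1 : ℤ) 1,
      Real.exp ((i : ℝ) * s₁ + (j : ℝ) * s₂) * A i j k q := by
  simp [Cmat, Matrix.sum_apply, Matrix.smul_apply, smul_eq_mul]

variable (hnn : ∀ i j k l, 0 ≤ A i j k l)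
include hnn

lemma cmat_nonneg (s₁ s₂ : ℝ) (k q : S) : 0 ≤ Cmat A s₁ s₂ k q := by
  rw [cmat_apply]
  exact Finset.sum_nonneg fun i _ => Finset.sum_nonneg fun j _ =>
    mul_nonneg (Real.exp_pos _).le (hnn i j k q)

lemma cpow_nonneg (s₁ s₂ : ℝ) : ∀ n (p q : S), 0 ≤ ((Cmat A s₁ s₂) ^ n) p q := by
  intro n
  induction n with
  | zero =>
    intro p q
    simp only [pow_zero, Matrix.one_apply]
    split <;> norm_num
  | succ n ih =>
    intro p q
    rw [pow_succ, Matrix.mul_apply]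
    exact Finset.sum_nonneg fun k _ => mul_nonneg (ih p k) (cmat_nonneg A hnn s₁ s₂ k q)

lemma pn_mul_exp_le (s₁ s₂ : ℝ) :
    ∀ n (x y : ℤ) (p q : S),
      Pn A n (0, 0, p) (x, y, q) * Real.exp ((x : ℝ) * s₁ + (y : ℝ) * s₂)
        ≤ ((Cmat A s₁ s₂) ^ n) p q := by
  intro n
  induction n with
  | zero =>
    intro x y p q
    by_cases h : ((0 : ℤ), (0 : ℤ), p) = (x, y, q)
    · injection h with h1 h2
      injection h2 with h2 h3
      subst h1; subst h2; subst h3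
      simp [Pn]
    · have h0 : Pn A 0 (0, 0, p) (x, y, q) = 0 := by simp [Pn, h]
      rw [h0, zero_mul]
      exact cpow_nonneg A hnn s₁ s₂ 0 p q
  | succ n ih =>
    intro x y p q
    have hPn : Pn A (n + 1) (0, 0, p) (x, y, q)
        = ∑ d₁ ∈ Finset.Icc (-1 : ℤ) 1, ∑ d₂ ∈ Finset.Icc (-1 : ℤ) 1, ∑ k : S,
            Pn A n (0, 0, p) (x - d₁, y - d₂, k) * A d₁ d₂ k q := rfl
    have hC : ((Cmat A s₁ s₂) ^ (n + 1)) p q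
        = ∑ d₁ ∈ Finset.Icc (-1 : ℤ) 1, ∑ d₂ ∈ Finset.Icc (-1 : ℤ) 1, ∑ k : S,
            ((Cmat A s₁ s₂) ^ n) p k *
              (Real.exp ((d₁ : ℝ) * s₁ + (d₂ : ℝ) * s₂) * A d₁ d₂ k q) := by
      rw [pow_succ, Matrix.mul_apply]
      simp_rw [cmat_apply, Finset.mul_sum]
      rw [Finset.sum_comm]
      refine Finset.sum_congr rfl fun d₁ _ => ?_
      rw [Finset.sum_comm]
    rw [hPn, hC, Finset.sum_mul]
    refine Finset.sum_le_sum fun d₁ _ => ?_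
    rw [Finset.sum_mul]
    refine Finset.sum_le_sum fun d₂ _ => ?_
    rw [Finset.sum_mul]
    refine Finset.sum_le_sum fun k _ => ?_
    have hexp : Real.exp ((x : ℝ) * s₁ + (y : ℝ) * s₂)
        = Real.exp (((x - d₁ : ℤ) : ℝ) * s₁ + ((y - d₂ : ℤ) : ℝ) * s₂) *
            Real.exp ((d₁ : ℝ) * s₁ + (d₂ : ℝ) * s₂) := by
      rw [← Real.exp_add]
      congr 1
      push_cast
      ring
    calc Pn A n (0, 0, p) (x - d₁, y - d₂, k) * A d₁ d₂ k q *
          Real.exp ((x : ℝ) * s₁ + (y : ℝ) * s₂)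
        = (Pn A n (0, 0, p) (x - d₁, y - d₂, k) *
            Real.exp (((x - d₁ : ℤ) : ℝ) * s₁ + ((y - d₂ : ℤ) : ℝ) * s₂)) *
            (Real.exp ((d₁ : ℝ) * s₁ + (d₂ : ℝ) * s₂) * A d₁ d₂ k q) := by
          rw [hexp]; ring
      _ ≤ ((Cmat A s₁ s₂) ^ n) p k *
            (Real.exp ((d₁ : ℝ) * s₁ + (d₂ : ℝ) * s₂) * A d₁ d₂ k q) := by
          exact mul_le_mul_of_nonneg_right (ih (x - d₁) (y - d₂) p k)
            (mul_nonneg (Real.exp_pos _).le (hnn d₁ d₂ k q))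

end auxChain

/-- Let `A_{i,j}`, `i,j ∈ {−1,0,1}`, be nonnegative matrices whose sum is an irreducible
stochastic matrix, with the associated random walk on `ℤ² × S` irreducible and aperiodic.
Then there exist `n₀ ≥ 1` and `b* > 0` such that
`χ(e^{s₁}, e^{s₂}) ≥ (b* (e^{s₁} + e^{s₂} + e^{−s₁} + e^{−s₂}))^{1/n₀}` for all `(s₁,s₂)`,
and consequently `Γ̄ = {(s₁,s₂) : χ(e^{s₁}, e^{s₂}) ≤ 1}` is bounded. -/
theorem stmt8 {S : Type*} [Fintype S] [DecidableEq S] [Nonempty S]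
    (A : ℤ → ℤ → Matrix S S ℝ)
    (hnn : ∀ i j k l, 0 ≤ A i j k l)
    (hstoch : ∀ p : S,
      ∑ i ∈ Finset.Icc (-1 : ℤ) 1, ∑ j ∈ Finset.Icc (-1 : ℤ) 1, ∑ q : S, A i j p q = 1)
    (hirr : ∀ p q : S, ∃ n : ℕ, 0 < n ∧
      0 < (((∑ i ∈ Finset.Icc (-1 : ℤ) 1, ∑ j ∈ Finset.Icc (-1 : ℤ) 1, A i j)) ^ n) p q)
    (hchain : ∀ s t : ℤ × ℤ × S, ∃ N : ℕ, ∀ n ≥ N, 0 < Pn A n s t) :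
    (∃ n₀ : ℕ, 1 ≤ n₀ ∧ ∃ b : ℝ, 0 < b ∧ ∀ s₁ s₂ : ℝ,
      (b * (Real.exp s₁ + Real.exp s₂ + Real.exp (-s₁) + Real.exp (-s₂))) ^ ((1 : ℝ) / n₀)
        ≤ spr ((Cmat A s₁ s₂).map Complex.ofReal)) ∧
    Bornology.IsBounded {p : ℝ × ℝ | spr ((Cmat A p.1 p.2).map Complex.ofReal) ≤ 1} := by
  classical
  obtain ⟨k⟩ := ‹Nonempty S›
  obtain ⟨N₁, h₁⟩ := hchain (0, 0, k) (1, 0, k)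
  obtain ⟨N₂, h₂⟩ := hchain (0, 0, k) (0, 1, k)
  obtain ⟨N₃, h₃⟩ := hchain (0, 0, k) (-1, 0, k)
  obtain ⟨N₄, h₄⟩ := hchain (0, 0, k) (0, -1, k)
  set n₀ : ℕ := max (max N₁ N₂) (max N₃ N₄) + 1 with hn₀def
  have hn₀pos : 0 < n₀ := Nat.succ_pos _
  have hP₁ : 0 < Pn A n₀ (0, 0, k) (1, 0, k) := h₁ n₀ (by omega)
  have hP₂ : 0 < Pn A n₀ (0, 0, k) (0, 1, k) := h₂ n₀ (by omega)
  have hP₃ : 0 < Pn A n₀ (0, 0, k) (-1, 0, k) := h₃ n₀ (by omega)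
  have hP₄ : 0 < Pn A n₀ (0, 0, k) (0, -1, k) := h₄ n₀ (by omega)
  set c : ℝ := min (min (Pn A n₀ (0, 0, k) (1, 0, k)) (Pn A n₀ (0, 0, k) (0, 1, k)))
      (min (Pn A n₀ (0, 0, k) (-1, 0, k)) (Pn A n₀ (0, 0, k) (0, -1, k))) with hcdef
  have hc : 0 < c := lt_min (lt_min hP₁ hP₂) (lt_min hP₃ hP₄)
  have hcard : (0 : ℝ) < 4 * Fintype.card S := by
    have := Fintype.card_pos (α := S)
    positivity
  set b : ℝ := c / (4 * Fintype.card S) with hbdef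
  have hb : 0 < b := div_pos hc hcard
  -- main inequality: b * E ≤ spr ^ n₀
  have main : ∀ s₁ s₂ : ℝ,
      b * (Real.exp s₁ + Real.exp s₂ + Real.exp (-s₁) + Real.exp (-s₂))
        ≤ spr ((Cmat A s₁ s₂).map Complex.ofReal) ^ n₀ := by
    intro s₁ s₂
    set C := Cmat A s₁ s₂ with hCdef
    set Mc := C.map Complex.ofReal with hMcdef
    have key : ∀ (x y : ℤ),
        Pn A n₀ (0, 0, k) (x, y, k) * Real.exp ((x : ℝ) * s₁ + (y : ℝ) * s₂)
          ≤ (C ^ n₀) k k := fun x y => pn_mul_exp_le A hnn s₁ s₂ n₀ x y k k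
    have e₁ : Pn A n₀ (0, 0, k) (1, 0, k) * Real.exp s₁ ≤ (C ^ n₀) k k := by
      simpa using key 1 0
    have e₂ : Pn A n₀ (0, 0, k) (0, 1, k) * Real.exp s₂ ≤ (C ^ n₀) k k := by
      simpa using key 0 1
    have e₃ : Pn A n₀ (0, 0, k) (-1, 0, k) * Real.exp (-s₁) ≤ (C ^ n₀) k k := by
      simpa using key (-1) 0
    have e₄ : Pn A n₀ (0, 0, k) (0, -1, k) * Real.exp (-s₂) ≤ (C ^ n₀) k k := by
      simpa using key 0 (-1)
    have c₁ : c * Real.exp s₁ ≤ (C ^ n₀) k k :=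
      le_trans (mul_le_mul_of_nonneg_right ((min_le_left _ _).trans (min_le_left _ _))
        (Real.exp_pos _).le) e₁
    have c₂ : c * Real.exp s₂ ≤ (C ^ n₀) k k :=
      le_trans (mul_le_mul_of_nonneg_right ((min_le_left _ _).trans (min_le_right _ _))
        (Real.exp_pos _).le) e₂
    have c₃ : c * Real.exp (-s₁) ≤ (C ^ n₀) k k :=
      le_trans (mul_le_mul_of_nonneg_right ((min_le_right _ _).trans (min_le_left _ _))
        (Real.exp_pos _).le) e₃
    have c₄ : c * Real.exp (-s₂) ≤ (C ^ n₀) k k :=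
      le_trans (mul_le_mul_of_nonneg_right ((min_le_right _ _).trans (min_le_right _ _))
        (Real.exp_pos _).le) e₄
    have hsum : c * (Real.exp s₁ + Real.exp s₂ + Real.exp (-s₁) + Real.exp (-s₂))
        ≤ 4 * (C ^ n₀) k k := by nlinarith [c₁, c₂, c₃, c₄]
    have hentry : (C ^ n₀) k k ≤ (C ^ n₀).trace := by
      rw [Matrix.trace]
      exact Finset.single_le_sum (f := fun j => (C ^ n₀) j j)
        (fun j _ => cpow_nonneg A hnn s₁ s₂ n₀ j j) (Finset.mem_univ k)
    have htrnn : 0 ≤ (C ^ n₀).trace := le_trans (cpow_nonneg A hnn s₁ s₂ n₀ k k) hentry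
    have htr : (C ^ n₀).trace ≤ (Fintype.card S : ℝ) * spr Mc ^ n₀ := by
      have h := trace_le_spr Mc hn₀pos
      rw [hMcdef, map_ofReal_pow, trace_map_ofReal, Complex.norm_real, Real.norm_eq_abs,
        abs_of_nonneg htrnn] at h
      exact h
    have hfinal : c * (Real.exp s₁ + Real.exp s₂ + Real.exp (-s₁) + Real.exp (-s₂))
        ≤ 4 * ((Fintype.card S : ℝ) * spr Mc ^ n₀) := by
      calc c * _ ≤ 4 * (C ^ n₀) k k := hsum
        _ ≤ 4 * (C ^ n₀).trace := by linarith [hentry]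
        _ ≤ 4 * ((Fintype.card S : ℝ) * spr Mc ^ n₀) := by linarith [htr]
    rw [hbdef, div_mul_eq_mul_div, div_le_iff₀ hcard]
    calc c * (Real.exp s₁ + Real.exp s₂ + Real.exp (-s₁) + Real.exp (-s₂))
        ≤ 4 * ((Fintype.card S : ℝ) * spr Mc ^ n₀) := hfinal
      _ = spr Mc ^ n₀ * (4 * Fintype.card S) := by ring
  have hmain : ∀ s₁ s₂ : ℝ,
      (b * (Real.exp s₁ + Real.exp s₂ + Real.exp (-s₁) + Real.exp (-s₂))) ^ ((1 : ℝ) / n₀)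
        ≤ spr ((Cmat A s₁ s₂).map Complex.ofReal) := by
    intro s₁ s₂
    have h0 : (0 : ℝ) ≤ b * (Real.exp s₁ + Real.exp s₂ + Real.exp (-s₁) + Real.exp (-s₂)) := by
      positivity
    have hsprnn : 0 ≤ spr ((Cmat A s₁ s₂).map Complex.ofReal) := spr_nonneg _
    calc (b * (Real.exp s₁ + Real.exp s₂ + Real.exp (-s₁) + Real.exp (-s₂))) ^ ((1 : ℝ) / n₀)
        ≤ (spr ((Cmat A s₁ s₂).map Complex.ofReal) ^ n₀) ^ ((1 : ℝ) / n₀) :=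
          Real.rpow_le_rpow h0 (main s₁ s₂) (by positivity)
      _ = spr ((Cmat A s₁ s₂).map Complex.ofReal) := by
          rw [← Real.rpow_natCast (spr ((Cmat A s₁ s₂).map Complex.ofReal)) n₀,
            ← Real.rpow_mul hsprnn, mul_one_div, div_self (by exact_mod_cast hn₀pos.ne' :
              (n₀ : ℝ) ≠ 0), Real.rpow_one]
  refine ⟨⟨n₀, hn₀pos, b, hb, hmain⟩, ?_⟩
  -- boundedness
  refine (Metric.isBounded_closedBall (x := (0 : ℝ × ℝ))
    (r := Real.log (1 / b))).subset ?_
  intro p hp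
  simp only [Set.mem_setOf_eq] at hp
  have hE : b * (Real.exp p.1 + Real.exp p.2 + Real.exp (-p.1) + Real.exp (-p.2)) ≤ 1 := by
    have h := main p.1 p.2
    have hspr : spr ((Cmat A p.1 p.2).map Complex.ofReal) ^ n₀ ≤ 1 :=
      pow_le_one₀ (spr_nonneg _) hp
    linarith
  have hb1 : (0 : ℝ) < 1 / b := by positivity
  have hE' : Real.exp p.1 + Real.exp p.2 + Real.exp (-p.1) + Real.exp (-p.2) ≤ 1 / b := by
    rw [le_div_iff₀ hb]
    nlinarith [hE]
  have hub : ∀ x : ℝ, Real.exp x ≤ 1 / b → x ≤ Real.log (1 / b) := fun x hx =>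
    (Real.le_log_iff_exp_le hb1).2 hx
  have q1 := Real.exp_pos p.1
  have q2 := Real.exp_pos p.2
  have q3 := Real.exp_pos (-p.1)
  have q4 := Real.exp_pos (-p.2)
  have h1 : p.1 ≤ Real.log (1 / b) := hub p.1 (by linarith)
  have h2 : -p.1 ≤ Real.log (1 / b) := hub (-p.1) (by linarith)
  have h3 : p.2 ≤ Real.log (1 / b) := hub p.2 (by linarith)
  have h4 : -p.2 ≤ Real.log (1 / b) := hub (-p.2) (by linarith)
  rw [Metric.mem_closedBall, dist_zero_right, Prod.norm_def]
  simp only [Real.norm_eq_abs]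
  exact max_le (abs_le.2 ⟨by linarith, h1⟩) (abs_le.2 ⟨by linarith, h3⟩)
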